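/- Let b > 1, x > 0, c ≥ 0, and k ≥ 1. Define x_i = x·(b-1)^{k-i}·b^{i-1} / (b^k - (b-1)^k) for 1 ≤ i ≤ k. Then ∑_{i=1}^k x_i = x, each x_i > 0, and for every index i ∈ {1,…,k}, the perceived cost b·x_i + ∑_{j=i+1}^k x_j + c equals x / (1 - ((b-1)/b)^k) + c. -/

import Mathlib

open Finset

lemma geo_aux (b : ℝ) (k i : ℕ) (hi : 1 ≤ i) (hik : i ≤ k) :
    ∑ j ∈ Finset.Icc i k, (b - 1) ^ (k - j) * b ^ (j - 1)
      = b ^ (i - 1) * (b ^ (k - i + 1) - (b - 1) ^ (k - i + 1)) := by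
  rw [← Finset.Ico_add_one_right_eq_Icc, Finset.sum_Ico_eq_sum_range]
  have h1 : k + 1 - i = k - i + 1 := by omega
  rw [h1]
  have h2 : ∀ m ∈ Finset.range (k - i + 1),
      (b - 1) ^ (k - (i + m)) * b ^ (i + m - 1)
        = b ^ (i - 1) * (b ^ m * (b - 1) ^ (k - i + 1 - 1 - m)) := by
    intro m hm
    simp only [Finset.mem_range] at hm
    have e1 : k - (i + m) = k - i + 1 - 1 - m := by omega
    have e2 : i + m - 1 = (i - 1) + m := by omega
    rw [e1, e2, pow_add]
    ring
  rw [Finset.sum_congr rfl h2, ← Finset.mul_sum]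
  congr 1
  have h := geom_sum₂_mul b (b - 1) (k - i + 1)
  have hone : b - (b - 1) = 1 := by ring
  rw [hone, mul_one] at h
  exact h

theorem stmt_2 (b x c : ℝ) (hb : 1 < b) (hx : 0 < x) (hc : 0 ≤ c)
    (k : ℕ) (hk : 1 ≤ k)
    (xi : ℕ → ℝ)
    (hxi : ∀ i ∈ Finset.Icc 1 k,
      xi i = x * (b - 1) ^ (k - i) * b ^ (i - 1) / (b ^ k - (b - 1) ^ k)) :
    (∑ i ∈ Finset.Icc 1 k, xi i = x) ∧
    (∀ i ∈ Finset.Icc 1 k, 0 < xi i) ∧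
    (∀ i ∈ Finset.Icc 1 k,
      b * xi i + (∑ j ∈ Finset.Icc (i + 1) k, xi j) + c
        = x / (1 - ((b - 1) / b) ^ k) + c) := by
  have hb0 : (0:ℝ) < b := lt_trans one_pos hb
  have hb1 : (0:ℝ) < b - 1 := by linarith
  have hk0 : k ≠ 0 := by omega
  have hlt : (b - 1) ^ k < b ^ k := pow_lt_pow_left₀ (by linarith) (le_of_lt hb1) hk0
  have hD : 0 < b ^ k - (b - 1) ^ k := by linarith
  have hDne : b ^ k - (b - 1) ^ k ≠ 0 := ne_of_gt hD
  have hsumA : ∀ m, 1 ≤ m → m ≤ k → ∑ j ∈ Finset.Icc m k, xi j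
      = x * (b ^ (m - 1) * (b ^ (k - m + 1) - (b - 1) ^ (k - m + 1)))
          / (b ^ k - (b - 1) ^ k) := by
    intro m hm hmk
    have hstep : ∀ j ∈ Finset.Icc m k,
        xi j = x / (b ^ k - (b - 1) ^ k) * ((b - 1) ^ (k - j) * b ^ (j - 1)) := by
      intro j hj
      obtain ⟨hj1, hj2⟩ := Finset.mem_Icc.mp hj
      rw [hxi j (Finset.mem_Icc.mpr ⟨le_trans hm hj1, hj2⟩)]
      ring
    rw [Finset.sum_congr rfl hstep, ← Finset.mul_sum, geo_aux b k m hm hmk]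
    ring
  refine ⟨?_, ?_, ?_⟩
  · have h1 := hsumA 1 le_rfl hk
    have e1 : k - 1 + 1 = k := by omega
    rw [e1] at h1
    rw [h1]
    field_simp
    simp
  · intro i hi
    rw [hxi i hi]
    exact div_pos (mul_pos (mul_pos hx (pow_pos hb1 _)) (pow_pos hb0 _)) hD
  · intro i hi
    obtain ⟨hi1, hik⟩ := Finset.mem_Icc.mp hi
    have hRHS : 1 - ((b - 1) / b) ^ k = (b ^ k - (b - 1) ^ k) / b ^ k := by
      rw [div_pow]
      field_simp
    rw [hxi i hi, hRHS]
    by_cases hik' : i = k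
    · subst hik'
      rw [Finset.Icc_eq_empty (by omega), Finset.sum_empty]
      have hbk : b ^ i = b * b ^ (i - 1) := by
        rw [← pow_succ']
        congr 1
        omega
      have e0 : i - i = 0 := by omega
      rw [e0, pow_zero, hbk]
      have hDne' : b * b ^ (i - 1) - (b - 1) ^ i ≠ 0 := by
        rw [← hbk]; exact hDne
      field_simp
      ring
    · rw [hsumA (i + 1) (by omega) (by omega)]
      have e1 : i + 1 - 1 = i := by omega
      have e2 : k - (i + 1) + 1 = k - i := by omega
      rw [e1, e2]
      have hbi : b ^ i = b * b ^ (i - 1) := by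
        rw [← pow_succ']
        congr 1
        omega
      have hbk : b ^ k = b * b ^ (i - 1) * b ^ (k - i) := by
        rw [mul_assoc, ← pow_add, ← pow_succ']
        congr 1
        omega
      rw [hbi, hbk]
      have hDne' : b * b ^ (i - 1) * b ^ (k - i) - (b - 1) ^ k ≠ 0 := by
        rw [← hbk]; exact hDne
      field_simp
      ring
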